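/- Let c ∈ F, u ∈ F^{1×m}, v ∈ F^{m×1} and A ∈ F^{m×m} with A invertible over F, and set f = c − u A⁻¹ v. Define the (m+2) × (m+2) matrix Ã = [[c, u, −1], [v, A, 0], [−1, 0, 0]] and the vectors ũ = (0,…,0,1) ∈ K^{1×(m+2)}, ṽ = ũᵀ. Then Ã is invertible over F and −ũ Ã⁻¹ ṽ = f; that is, the pure linearization (ũ, Ã, ṽ) represents the same element f. -/

import Mathlib

open Matrix

/-- Given a linearization `L = [[c, u], [v, A]]` of `f = c − u A⁻¹ v`, the enlarged pure
linearization `Ã = [[c, u, −1], [v, A, 0], [−1, 0, 0]]` with `ũ = (0,…,0,1)`, `ṽ = ũᵀ`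
is invertible over `F` and `−ũ Ã⁻¹ ṽ = f`. -/
theorem pure_linearization_extension {K F : Type*} [Field K] [DivisionRing F] [Algebra K F]
    {m : ℕ}
    (c : F) (u : Matrix (Fin 1) (Fin m) F) (v : Matrix (Fin m) (Fin 1) F)
    (A B : Matrix (Fin m) (Fin m) F)
    (hB : A * B = 1) (hB' : B * A = 1)
    (f : F) (hf : f = c - (u * B * v) 0 0) :
    let Atil : Matrix ((Fin 1 ⊕ Fin m) ⊕ Fin 1) ((Fin 1 ⊕ Fin m) ⊕ Fin 1) F :=
      fromBlocks (fromBlocks (Matrix.of fun _ _ => c) u v A)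
        (fromRows (Matrix.of fun _ _ => (-1 : F)) 0)
        (fromCols (Matrix.of fun _ _ => (-1 : F)) 0) 0
    let util : Matrix (Fin 1) ((Fin 1 ⊕ Fin m) ⊕ Fin 1) F :=
      Matrix.of fun _ j => if j = Sum.inr 0 then 1 else 0
    let vtil : Matrix ((Fin 1 ⊕ Fin m) ⊕ Fin 1) (Fin 1) F :=
      Matrix.of fun i _ => if i = Sum.inr 0 then 1 else 0
    ∃ Btil, Atil * Btil = 1 ∧ Btil * Atil = 1 ∧
      -((util * Btil * vtil) 0 0) = f := by
  intro Atil util vtil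
  set N : Matrix (Fin 1) (Fin 1) F := Matrix.of fun _ _ => (-1 : F) with hN
  set Btil : Matrix ((Fin 1 ⊕ Fin m) ⊕ Fin 1) ((Fin 1 ⊕ Fin m) ⊕ Fin 1) F :=
    fromBlocks (fromBlocks 0 0 0 B) (fromRows N (B * v))
      (fromCols N (u * B)) (Matrix.of fun _ _ => -f) with hBtil
  have hABe : ∀ i j, ∑ k, A i k * B k j = (if i = j then (1:F) else 0) := by
    intro i j
    rw [← Matrix.mul_apply, hB, Matrix.one_apply]
  have hBAe : ∀ i j, ∑ k, B i k * A k j = (if i = j then (1:F) else 0) := by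
    intro i j
    rw [← Matrix.mul_apply, hB', Matrix.one_apply]
  -- the scalar f in fully expanded double-sum form
  have hd : (u * B * v) 0 0 = ∑ y, ∑ x, u 0 x * (B x y * v y 0) := by
    rw [Matrix.mul_apply]
    simp [Matrix.mul_apply, Finset.sum_mul, mul_assoc]
  have hd' : (u * B * v) 0 0 = ∑ x, ∑ y, u 0 x * (B x y * v y 0) := by
    rw [hd, Finset.sum_comm]
  -- A * (B * v) = v entrywise
  have hABv : ∀ (i : Fin m), ∑ x, ∑ l, A i x * (B x l * v l 0) = v i 0 := by
    intro i
    rw [Finset.sum_comm]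
    have : ∀ l, ∑ x, A i x * (B x l * v l 0) = (∑ x, A i x * B x l) * v l 0 := by
      intro l; rw [Finset.sum_mul]; simp [mul_assoc]
    simp only [this, hABe]
    simp
  -- (u * B) * A = u entrywise
  have huBA : ∀ (j : Fin m), ∑ x, ∑ l, u 0 l * (B l x * A x j) = u 0 j := by
    intro j
    rw [Finset.sum_comm]
    have : ∀ l, ∑ x, u 0 l * (B l x * A x j) = u 0 l * ∑ x, B l x * A x j := by
      intro l; rw [Finset.mul_sum]
    simp only [this, hBAe]
    simp
  have h1 : Atil * Btil = 1 := by
    ext i j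
    rw [Matrix.mul_apply]
    rcases i with (i | i) | i <;> rcases j with (j | j) | j <;>
      simp [Atil, hBtil, hN, Fintype.sum_sum_type, Fin.sum_univ_one, Fin.eq_zero,
        Matrix.one_apply, Matrix.mul_apply, hABe, hBAe, eq_iff_true_of_subsingleton,
        Finset.mul_sum, Finset.sum_mul, mul_assoc]
    · rw [hf, hd']; abel
    · rw [hABv i]; simp
  have h2 : Btil * Atil = 1 := by
    ext i j
    rw [Matrix.mul_apply]
    rcases i with (i | i) | i <;> rcases j with (j | j) | j <;>
      simp [Atil, hBtil, hN, Fintype.sum_sum_type, Fin.sum_univ_one, Fin.eq_zero,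
        Matrix.one_apply, Matrix.mul_apply, hABe, hBAe, eq_iff_true_of_subsingleton,
        Finset.mul_sum, Finset.sum_mul, mul_assoc]
    · rw [hf, hd]; abel
    · rw [huBA j]; simp
  refine ⟨Btil, h1, h2, ?_⟩
  have : (util * Btil * vtil) 0 0 = -f := by
    simp [Matrix.mul_apply, Fintype.sum_sum_type, Fin.sum_univ_one, util, vtil,
      hBtil]
  rw [this, neg_neg]
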